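/- Let S be a UPB in H with the local independence property, Π the projector onto span S, ε = min over fully product unit vectors of ⟨·|Π|·⟩, and W = (Π − ε·1)/(|S| − ε·dim H). Then ε > 0, tr(W) = 1, W is positive on product states, and the value of the associated Bell expression on the correlations P(a|x) = tr(W ⊗_i M^{a_i}_{x_i}) (measurements along the local subsets S^{(i)}_k) equals |S|(1−ε)/(|S| − ε·dim H) > 1; hence the Bell inequality constructed from any UPB with the local independence property is violated by some no-signaling correlations. -/

import Mathlib

open Matrix

/-- Tensor product over the `N` parties of local vectors. -/
def vtens {N : ℕ} {d : Fin N → ℕ} (v : (i : Fin N) → Fin (d i) → ℂ) :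
    ((i : Fin N) → Fin (d i)) → ℂ :=
  fun u => ∏ i, v i (u i)

/-- Tensor product over the `N` parties of local matrices. -/
def tensProd {N : ℕ} {d : Fin N → ℕ}
    (M : (i : Fin N) → Matrix (Fin (d i)) (Fin (d i)) ℂ) :
    Matrix ((i : Fin N) → Fin (d i)) ((i : Fin N) → Fin (d i)) ℂ :=
  Matrix.of fun u v => ∏ i, M i (u i) (v i)

/-- Rank-one projector `|ψ⟩⟨ψ|`. -/
def outer {N : ℕ} {d : Fin N → ℕ} (ψ : ((i : Fin N) → Fin (d i)) → ℂ) :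
    Matrix ((i : Fin N) → Fin (d i)) ((i : Fin N) → Fin (d i)) ℂ :=
  Matrix.of fun u w => ψ u * star (ψ w)

/-- Rank-one local projector `|v⟩⟨v|`. -/
def proj {n : ℕ} (v : Fin n → ℂ) : Matrix (Fin n) (Fin n) ℂ :=
  Matrix.of fun i j => v i * star (v j)

/-- A no-signaling box with inputs `x i : Fin (K i)` and outputs
`a i : Fin (d i)`. -/
def NoSignaling {N : ℕ} {K d : Fin N → ℕ}
    (P : ((i : Fin N) → Fin (K i)) → ((i : Fin N) → Fin (d i)) → ℝ) : Prop :=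
  ∀ (j : Fin N) (x x' : (i : Fin N) → Fin (K i)), (∀ i, i ≠ j → x i = x' i) →
    ∀ a : (i : Fin N) → Fin (d i),
      ∑ b : Fin (d j), P x (Function.update a j b)
        = ∑ b : Fin (d j), P x' (Function.update a j b)

namespace UPBaux

/-- delta vector -/
def dvec {n : ℕ} (b : Fin n) : Fin n → ℂ := fun c => if c = b then 1 else 0

lemma dvec_unit {n : ℕ} (b : Fin n) : star (dvec b) ⬝ᵥ dvec b = 1 := by
  simp [dvec, dotProduct, apply_ite]

lemma vtens_dot {N : ℕ} {d : Fin N → ℕ} (φ φ' : (i : Fin N) → Fin (d i) → ℂ) :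
    star (vtens φ) ⬝ᵥ vtens φ' = ∏ i, star (φ i) ⬝ᵥ φ' i := by
  classical
  simp only [dotProduct, vtens, Pi.star_apply, star_prod, ← Finset.prod_mul_distrib]
  rw [Finset.prod_univ_sum (fun i => (Finset.univ : Finset (Fin (d i))))
    (fun i b => star (φ i b) * φ' i b)]
  simp [Fintype.piFinset_univ]

lemma tensProd_proj_eq_outer {N : ℕ} {d : Fin N → ℕ} (φ : (i : Fin N) → Fin (d i) → ℂ) :
    tensProd (fun i => proj (φ i)) = outer (vtens φ) := by
  ext u w
  simp [tensProd, proj, outer, vtens, star_prod, Finset.prod_mul_distrib]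

lemma dot_outer_mulVec {N : ℕ} {d : Fin N → ℕ} (ψ v w : ((i : Fin N) → Fin (d i)) → ℂ) :
    star v ⬝ᵥ (outer ψ).mulVec w = star (star ψ ⬝ᵥ v) * (star ψ ⬝ᵥ w) := by
  simp only [dotProduct, mulVec, outer, Matrix.of_apply, Pi.star_apply, star_sum, star_mul',
    star_star, Finset.mul_sum, Finset.sum_mul]
  rw [Finset.sum_comm]
  apply Finset.sum_congr rfl; intro u' _
  apply Finset.sum_congr rfl; intro u'' _
  ring

lemma trace_mul_outer {N : ℕ} {d : Fin N → ℕ}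
    (W : Matrix ((i : Fin N) → Fin (d i)) ((i : Fin N) → Fin (d i)) ℂ)
    (ψ : ((i : Fin N) → Fin (d i)) → ℂ) :
    (W * outer ψ).trace = star ψ ⬝ᵥ W.mulVec ψ := by
  simp only [trace, Matrix.mul_apply, outer, Matrix.of_apply, diag_apply, dotProduct, mulVec,
    Pi.star_apply, Finset.mul_sum]
  apply Finset.sum_congr rfl; intro u' _
  apply Finset.sum_congr rfl; intro u'' _
  ring

lemma trace_outer {N : ℕ} {d : Fin N → ℕ} (ψ : ((i : Fin N) → Fin (d i)) → ℂ) :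
    (outer ψ).trace = star ψ ⬝ᵥ ψ := by
  simp only [trace, outer, diag_apply, Matrix.of_apply, dotProduct, Pi.star_apply]
  apply Finset.sum_congr rfl; intro u _; ring

lemma vtens_update_decomp {N : ℕ} {d : Fin N → ℕ} (φ : (i : Fin N) → Fin (d i) → ℂ)
    (j : Fin N) (c : Fin (d j) → ℂ) :
    vtens (Function.update φ j c) = ∑ b, c b • vtens (Function.update φ j (dvec b)) := by
  classical
  funext u
  simp only [Finset.sum_apply, Pi.smul_apply, smul_eq_mul, vtens]
  have hsplit : ∀ (c' : Fin (d j) → ℂ),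
      ∏ i, (Function.update φ j c') i (u i)
        = c' (u j) * ∏ i ∈ Finset.univ.erase j, φ i (u i) := by
    intro c'
    rw [← Finset.mul_prod_erase Finset.univ _ (Finset.mem_univ j)]
    rw [Function.update_self]
    congr 1
    apply Finset.prod_congr rfl
    intro i hi
    rw [Function.update_of_ne (Finset.ne_of_mem_erase hi)]
  simp only [hsplit]
  simp only [← mul_assoc, ← Finset.sum_mul]
  congr 1
  simp [dvec]

lemma vtens_delta {N : ℕ} {d : Fin N → ℕ} (u : (i : Fin N) → Fin (d i)) :
    vtens (fun i => dvec (u i)) = fun u' => if u' = u then 1 else 0 := by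
  classical
  funext u'
  simp only [vtens, dvec]
  by_cases h : u' = u
  · subst h; simp
  · have : ∃ i, u' i ≠ u i := by
      by_contra hc
      push_neg at hc
      exact h (funext hc)
    obtain ⟨i, hi⟩ := this
    rw [if_neg h]
    exact Finset.prod_eq_zero (Finset.mem_univ i) (by simp [hi])

lemma rows_complete {n : ℕ} (B : Fin n → Fin n → ℂ)
    (h : ∀ b b', star (B b) ⬝ᵥ B b' = if b = b' then 1 else 0) (u w : Fin n) :
    ∑ b, B b u * star (B b w) = if u = w then 1 else 0 := by
  classical
  set V : Matrix (Fin n) (Fin n) ℂ := Matrix.of fun b c => B b c with hV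
  have h1 : V * Vᴴ = 1 := by
    ext b b'
    have hb := congrArg star (h b b')
    simp only [dotProduct, Pi.star_apply, star_sum, star_mul', star_star, apply_ite (star : ℂ → ℂ), star_one, star_zero] at hb
    simpa [Matrix.mul_apply, hV, Matrix.one_apply] using hb
  have h2 : Vᴴ * V = 1 := mul_eq_one_comm.mp h1
  have h3 : (Vᴴ * V) w u = (1 : Matrix (Fin n) (Fin n) ℂ) w u := by rw [h2]
  simp only [Matrix.mul_apply, conjTranspose_apply, Matrix.one_apply, hV, Matrix.of_apply] at h3
  rw [show ((if u = w then (1:ℂ) else 0) = if w = u then (1:ℂ) else 0) by simp [eq_comm]]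
  rw [← h3]
  apply Finset.sum_congr rfl; intro b _; ring


lemma gpos {s n : ℕ} (ε : ℝ) (γ : Fin s → Fin n → ℂ)
    (hb : ∀ c : Fin n → ℂ, star c ⬝ᵥ c = 1 →
      ε ≤ ∑ m, Complex.normSq (∑ b, c b * γ m b))
    (c : Fin n → ℂ) :
    ε * (∑ b, Complex.normSq (c b)) ≤ ∑ m, Complex.normSq (∑ b, c b * γ m b) := by
  classical
  set n2 := ∑ b, Complex.normSq (c b) with hn2
  rcases eq_or_lt_of_le (show (0:ℝ) ≤ n2 from Finset.sum_nonneg fun b _ => Complex.normSq_nonneg _)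
    with h0 | h0
  · have hz : ∀ b, c b = 0 := by
      intro b
      have := (Finset.sum_eq_zero_iff_of_nonneg
        (fun b _ => Complex.normSq_nonneg (c b))).mp h0.symm b (Finset.mem_univ b)
      exact Complex.normSq_eq_zero.mp this
    simp [hz, ← h0]
  · set r := Real.sqrt n2 with hr
    have hrpos : 0 < r := Real.sqrt_pos.mpr h0
    have hr2 : r * r = n2 := Real.mul_self_sqrt h0.le
    set c' : Fin n → ℂ := fun b => (r⁻¹ : ℝ) * c b with hc'
    have hnorm : ∀ z : ℂ, Complex.normSq ((r⁻¹ : ℝ) * z) = r⁻¹ * r⁻¹ * Complex.normSq z := by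
      intro z; rw [Complex.normSq_mul, Complex.normSq_ofReal]; try ring
    have hc'unit : star c' ⬝ᵥ c' = 1 := by
      have : star c' ⬝ᵥ c' = ((∑ b, Complex.normSq (c' b) : ℝ) : ℂ) := by
        simp only [dotProduct, Pi.star_apply, Complex.ofReal_sum]
        exact Finset.sum_congr rfl fun b _ => by
          simp only [Complex.normSq_eq_conj_mul_self, Complex.star_def]
      rw [this]
      have : ∑ b, Complex.normSq (c' b) = 1 := by
        simp only [hc', hnorm, ← Finset.mul_sum, ← hn2]
        rw [← hr2]
        field_simp
      rw [this]; norm_num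
    have hb' := hb c' hc'unit
    have hgc' : ∑ m, Complex.normSq (∑ b, c' b * γ m b)
        = r⁻¹ * r⁻¹ * ∑ m, Complex.normSq (∑ b, c b * γ m b) := by
      rw [Finset.mul_sum]
      apply Finset.sum_congr rfl; intro m _
      rw [show (∑ b, c' b * γ m b) = ((r⁻¹:ℝ):ℂ) * ∑ b, c b * γ m b by
        rw [Finset.mul_sum]; exact Finset.sum_congr rfl fun b _ => by simp [hc']; ring]
      exact hnorm _
    rw [hgc'] at hb'
    have hinv : r⁻¹ * r⁻¹ = n2⁻¹ := by rw [← hr2, mul_inv]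
    rw [hinv, inv_mul_eq_div] at hb'
    exact (le_div_iff₀ h0).mp hb'

lemma step_lemma {s n : ℕ} (ε : ℝ) (γ : Fin s → Fin n → ℂ)
    (hb : ∀ c : Fin n → ℂ, star c ⬝ᵥ c = 1 →
      ε ≤ ∑ m, Complex.normSq (∑ b, c b * γ m b))
    (hdiag : ∀ b, (∑ m, Complex.normSq (γ m b)) = ε)
    (c : Fin n → ℂ) (hc : star c ⬝ᵥ c = 1) :
    (∑ m, Complex.normSq (∑ b, c b * γ m b)) = ε := by
  classical
  have hκ : ∀ b b', b ≠ b' → (∑ m, (starRingEnd ℂ) (γ m b) * γ m b') = 0 := by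
    intro b b' hbb'
    set κ := ∑ m, (starRingEnd ℂ) (γ m b) * γ m b' with hκdef
    have hRe : ∀ t : ℂ, 0 ≤ ((starRingEnd ℂ) κ * (starRingEnd ℂ) t).re := by
      intro t
      set ct : Fin n → ℂ := fun b'' => if b'' = b then 1 else if b'' = b' then t else 0 with hct
      have hsum2 : ∀ (f : ℂ → ℝ), f 0 = 0 →
          ∑ b'', f (ct b'') = f 1 + f t := by
        intro f hf0
        rw [← Finset.add_sum_erase _ _ (Finset.mem_univ b)]
        rw [← Finset.add_sum_erase _ _ (Finset.mem_erase.mpr ⟨Ne.symm hbb', Finset.mem_univ b'⟩)]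
        have h1 : ct b = 1 := by simp [hct]
        have h2 : ct b' = t := by simp [hct, Ne.symm hbb']
        rw [h1, h2]
        have : ∑ b'' ∈ (Finset.univ.erase b).erase b', f (ct b'') = 0 := by
          apply Finset.sum_eq_zero
          intro b'' hb''
          have hne1 : b'' ≠ b' := (Finset.mem_erase.mp hb'').1
          have hne2 : b'' ≠ b := (Finset.mem_erase.mp (Finset.mem_erase.mp hb'').2).1
          simp [hct, hne1, hne2, hf0]
        rw [this]; ring
      have hzsum : ∀ m, (∑ b'', ct b'' * γ m b'') = γ m b + t * γ m b' := by
        intro m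
        rw [← Finset.add_sum_erase _ _ (Finset.mem_univ b)]
        rw [← Finset.add_sum_erase _ _ (Finset.mem_erase.mpr ⟨Ne.symm hbb', Finset.mem_univ b'⟩)]
        have h1 : ct b = 1 := by simp [hct]
        have h2 : ct b' = t := by simp [hct, Ne.symm hbb']
        rw [h1, h2]
        have : ∑ b'' ∈ (Finset.univ.erase b).erase b', ct b'' * γ m b'' = 0 := by
          apply Finset.sum_eq_zero
          intro b'' hb''
          have hne1 : b'' ≠ b' := (Finset.mem_erase.mp hb'').1
          have hne2 : b'' ≠ b := (Finset.mem_erase.mp (Finset.mem_erase.mp hb'').2).1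
          simp [hct, hne1, hne2]
        rw [this]; ring
      have hg := gpos ε γ hb ct
      have hl : ∑ b'', Complex.normSq (ct b'') = 1 + Complex.normSq t := by
        rw [hsum2 Complex.normSq Complex.normSq_zero]; simp
      have hr : ∑ m, Complex.normSq (∑ b'', ct b'' * γ m b'')
          = ε + Complex.normSq t * ε + 2 * ((starRingEnd ℂ) κ * (starRingEnd ℂ) t).re := by
        have : ∀ m, Complex.normSq (∑ b'', ct b'' * γ m b'')
            = Complex.normSq (γ m b) + Complex.normSq t * Complex.normSq (γ m b')
              + 2 * (γ m b * (starRingEnd ℂ) (t * γ m b')).re := by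
          intro m; rw [hzsum m, Complex.normSq_add, Complex.normSq_mul]
        simp only [this, Finset.sum_add_distrib, ← Finset.mul_sum, hdiag]
        congr 1
        rw [hκdef, map_sum, Finset.sum_mul, Complex.re_sum]
        congr 1
        apply Finset.sum_congr rfl
        intro m _
        congr 1
        simp only [_root_.map_mul, Complex.conj_conj]
        ring
      rw [hl, hr] at hg
      nlinarith [hg]
    have h := hRe (-(starRingEnd ℂ) κ)
    have h2 : (starRingEnd ℂ) κ * (starRingEnd ℂ) (-(starRingEnd ℂ) κ)
        = -((Complex.normSq κ : ℝ) : ℂ) := by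
      rw [map_neg, Complex.conj_conj, Complex.normSq_eq_conj_mul_self]; ring
    rw [h2] at h
    simp only [Complex.neg_re, Complex.ofReal_re] at h
    exact Complex.normSq_eq_zero.mp
      (le_antisymm (by linarith) (Complex.normSq_nonneg κ))
  have expand : ((∑ m, Complex.normSq (∑ b, c b * γ m b) : ℝ) : ℂ)
      = ∑ b, ∑ b', (starRingEnd ℂ) (c b) * c b' * (∑ m, (starRingEnd ℂ) (γ m b) * γ m b') := by
    rw [Complex.ofReal_sum]
    have h1 : ∀ m, ((Complex.normSq (∑ b, c b * γ m b) : ℝ) : ℂ)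
        = ∑ b, ∑ b', (starRingEnd ℂ) (c b) * c b' * ((starRingEnd ℂ) (γ m b) * γ m b') := by
      intro m
      rw [Complex.normSq_eq_conj_mul_self, map_sum, Finset.sum_mul_sum]
      apply Finset.sum_congr rfl; intro b _
      apply Finset.sum_congr rfl; intro b' _
      simp only [_root_.map_mul]; ring
    simp only [h1]
    rw [Finset.sum_comm]
    apply Finset.sum_congr rfl; intro b _
    rw [Finset.sum_comm]
    apply Finset.sum_congr rfl; intro b' _
    rw [Finset.mul_sum]
  have hdiagC : ∀ b, (∑ m, (starRingEnd ℂ) (γ m b) * γ m b) = ((ε:ℝ):ℂ) := by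
    intro b
    rw [← hdiag b, Complex.ofReal_sum]
    exact Finset.sum_congr rfl fun m _ => Complex.normSq_eq_conj_mul_self.symm
  have hfin : ((∑ m, Complex.normSq (∑ b, c b * γ m b) : ℝ) : ℂ) = ((ε:ℝ):ℂ) := by
    rw [expand]
    have hrow : ∀ b, (∑ b', (starRingEnd ℂ) (c b) * c b' * (∑ m, (starRingEnd ℂ) (γ m b) * γ m b'))
        = (starRingEnd ℂ) (c b) * c b * ((ε:ℝ):ℂ) := by
      intro b
      rw [Finset.sum_eq_single b]
      · rw [hdiagC]
      · intro b' _ hne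
        rw [hκ b b' (Ne.symm hne), mul_zero]
      · intro hmem; exact absurd (Finset.mem_univ b) hmem
    simp only [hrow, ← Finset.sum_mul]
    have hcc : (∑ b, (starRingEnd ℂ) (c b) * c b) = 1 := by
      rw [← hc]
      simp [dotProduct, Complex.star_def]
    rw [hcc, one_mul]
  exact Complex.ofReal_injective hfin


lemma sum_mulVec {I : Type*} [Fintype I] {s : ℕ} (A : Fin s → Matrix I I ℂ) (v : I → ℂ) :
    (∑ m, A m).mulVec v = ∑ m, (A m).mulVec v := by
  funext u
  simp only [mulVec, dotProduct, Finset.sum_apply, Matrix.sum_apply, Finset.sum_mul]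
  rw [Finset.sum_comm]

lemma dot_sum {I : Type*} [Fintype I] {s : ℕ} (f : Fin s → I → ℂ) (v : I → ℂ) :
    v ⬝ᵥ (∑ m, f m) = ∑ m, v ⬝ᵥ f m := by
  simp only [dotProduct, Finset.sum_apply, Finset.mul_sum]
  rw [Finset.sum_comm]

lemma prod_ite_eq_ite {N : ℕ} {d : Fin N → ℕ} (u w : (i : Fin N) → Fin (d i)) :
    (∏ i, if u i = w i then (1:ℂ) else 0) = if u = w then 1 else 0 := by
  by_cases h : u = w
  · subst h; simp
  · rw [if_neg h]
    have : ∃ i, u i ≠ w i := by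
      by_contra hc; push_neg at hc; exact h (funext hc)
    obtain ⟨i, hi⟩ := this
    exact Finset.prod_eq_zero (Finset.mem_univ i) (by simp [hi])

lemma outer_vtens_apply {N : ℕ} {d : Fin N → ℕ} (φ : (i : Fin N) → Fin (d i) → ℂ)
    (u w : (i : Fin N) → Fin (d i)) :
    outer (vtens φ) u w = ∏ i, φ i (u i) * star (φ i (w i)) := by
  simp [outer, vtens, star_prod, Finset.prod_mul_distrib]

lemma sum_outer_eq_one {N : ℕ} {d : Fin N → ℕ} (φ : (i : Fin N) → Fin (d i) → Fin (d i) → ℂ)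
    (h : ∀ i b b', star (φ i b) ⬝ᵥ φ i b' = if b = b' then 1 else 0) :
    ∑ a' : ((i : Fin N) → Fin (d i)), outer (vtens fun i => φ i (a' i)) = 1 := by
  classical
  ext u w
  rw [Matrix.sum_apply]
  have h1 : ∀ a' : (i : Fin N) → Fin (d i),
      outer (vtens fun i => φ i (a' i)) u w
        = ∏ i, φ i (a' i) (u i) * star (φ i (a' i) (w i)) :=
    fun a' => outer_vtens_apply _ u w
  simp only [h1]
  rw [show (Finset.univ : Finset ((i : Fin N) → Fin (d i)))
      = Fintype.piFinset (fun i => (Finset.univ : Finset (Fin (d i)))) from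
      (Fintype.piFinset_univ).symm]
  rw [← Finset.prod_univ_sum (fun i => (Finset.univ : Finset (Fin (d i))))
    (fun i b => φ i b (u i) * star (φ i b (w i)))]
  have h2 : ∀ i, (∑ b, φ i b (u i) * star (φ i b (w i))) = if u i = w i then 1 else 0 :=
    fun i => rows_complete (φ i) (h i) (u i) (w i)
  simp only [h2]
  rw [prod_ite_eq_ite]
  simp [Matrix.one_apply]

lemma sum_outer_update {N : ℕ} {d : Fin N → ℕ} (φ : (i : Fin N) → Fin (d i) → Fin (d i) → ℂ)
    (h : ∀ i b b', star (φ i b) ⬝ᵥ φ i b' = if b = b' then 1 else 0)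
    (j : Fin N) (a₀ : (i : Fin N) → Fin (d i)) :
    ∑ b : Fin (d j), outer (vtens fun i => φ i (Function.update a₀ j b i))
      = tensProd (fun i => if i = j then (1 : Matrix (Fin (d i)) (Fin (d i)) ℂ)
          else proj (φ i (a₀ i))) := by
  classical
  ext u w
  rw [Matrix.sum_apply]
  have h1 : ∀ b : Fin (d j),
      outer (vtens fun i => φ i (Function.update a₀ j b i)) u w
        = ∏ i, φ i (Function.update a₀ j b i) (u i) * star (φ i (Function.update a₀ j b i) (w i)) :=
    fun b => outer_vtens_apply _ u w
  simp only [h1]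
  have hsplit : ∀ b : Fin (d j),
      (∏ i, φ i (Function.update a₀ j b i) (u i) * star (φ i (Function.update a₀ j b i) (w i)))
        = (φ j b (u j) * star (φ j b (w j)))
          * ∏ i ∈ Finset.univ.erase j, φ i (a₀ i) (u i) * star (φ i (a₀ i) (w i)) := by
    intro b
    rw [← Finset.mul_prod_erase Finset.univ _ (Finset.mem_univ j), Function.update_self]
    congr 1
    apply Finset.prod_congr rfl
    intro i hi
    rw [Function.update_of_ne (Finset.ne_of_mem_erase hi)]
  simp only [hsplit]
  rw [← Finset.sum_mul, rows_complete (φ j) (h j) (u j) (w j)]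
  show _ = ∏ i, (if i = j then (1 : Matrix (Fin (d i)) (Fin (d i)) ℂ)
      else proj (φ i (a₀ i))) (u i) (w i)
  rw [← Finset.mul_prod_erase Finset.univ _ (Finset.mem_univ j)]
  rw [if_pos rfl]
  congr 1
  apply Finset.prod_congr rfl
  intro i hi
  have hne : i ≠ j := Finset.ne_of_mem_erase hi
  simp [hne, proj]

end UPBaux

open UPBaux

/-- From any UPB with the local independence property one gets a Bell
inequality with no quantum violation which is nevertheless violated by some
no-signaling correlations.  The UPB `S = {Ψ m}`, `Ψ m = ⨂ᵢ B i (x m i) (a m i)`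
(with `B i t` the orthonormal local bases/settings, no two vectors of different
settings orthogonal), spans a proper subspace (`s < dim H`) and no fully
product vector is orthogonal to all its elements.  With `Π` the projector onto
`span S`, `ε` the least value of `⟨·|Π|·⟩` over fully product unit vectors, and
`W = (Π − ε·𝟙)/(s − ε·dim H)`: `ε > 0`, `tr W = 1`, `W` is positive on product
states, the value of the Bell expression on the correlations
`P(a|x) = tr(W ⨂ᵢ |B i (x i) (a i)⟩⟨B i (x i) (a i)|)` equals
`s(1−ε)/(s − ε·dim H) > 1`, and hence some no-signaling box violates the Bell
inequality `∑ₘ P(a m|x m) ≤ 1`. -/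
theorem upb_bell_inequality_ns_violation (N : ℕ) (K d : Fin N → ℕ) (s : ℕ)
    (B : (i : Fin N) → Fin (K i) → Fin (d i) → Fin (d i) → ℂ)
    (hON : ∀ i t a a', star (B i t a) ⬝ᵥ B i t a' = if a = a' then 1 else 0)
    (hLIP : ∀ i t t' a a', t ≠ t' → star (B i t a) ⬝ᵥ B i t' a' ≠ 0)
    (x : Fin s → (i : Fin N) → Fin (K i))
    (a : Fin s → (i : Fin N) → Fin (d i))
    (horth : ∀ m n, m ≠ n →
      star (vtens fun i => B i (x m i) (a m i)) ⬝ᵥ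
        vtens (fun i => B i (x n i) (a n i)) = 0)
    (hproper : s < ∏ i, d i)
    (hupb : ∀ φ : (i : Fin N) → Fin (d i) → ℂ,
      (∀ i, star (φ i) ⬝ᵥ φ i = 1) →
      ∃ m, star (vtens fun i => B i (x m i) (a m i)) ⬝ᵥ vtens φ ≠ 0)
    (Pr : Matrix ((i : Fin N) → Fin (d i)) ((i : Fin N) → Fin (d i)) ℂ)
    (hPr : Pr = ∑ m, outer (vtens fun i => B i (x m i) (a m i)))
    (ε : ℝ)
    (hε : IsLeast {r : ℝ | ∃ φ : (i : Fin N) → Fin (d i) → ℂ,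
      (∀ i, star (φ i) ⬝ᵥ φ i = 1) ∧
      (r : ℂ) = star (vtens φ) ⬝ᵥ Pr.mulVec (vtens φ)} ε)
    (W : Matrix ((i : Fin N) → Fin (d i)) ((i : Fin N) → Fin (d i)) ℂ)
    (hW : W = (((s : ℝ) - ε * ∏ i, (d i : ℝ) : ℝ) : ℂ)⁻¹ •
      (Pr - (ε : ℝ) • (1 : Matrix ((i : Fin N) → Fin (d i)) ((i : Fin N) → Fin (d i)) ℂ))) :
    0 < ε ∧
    W.trace = 1 ∧
    (∀ φ : (i : Fin N) → Fin (d i) → ℂ, (∀ i, star (φ i) ⬝ᵥ φ i = 1) →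
      0 ≤ (star (vtens φ) ⬝ᵥ W.mulVec (vtens φ)).re) ∧
    (∑ m, ((W * tensProd (fun i => proj (B i (x m i) (a m i)))).trace).re
      = s * (1 - ε) / ((s : ℝ) - ε * ∏ i, (d i : ℝ))) ∧
    1 < s * (1 - ε) / ((s : ℝ) - ε * ∏ i, (d i : ℝ)) ∧
    ∃ P : ((i : Fin N) → Fin (K i)) → ((i : Fin N) → Fin (d i)) → ℝ,
      (∀ x' a', 0 ≤ P x' a') ∧
      (∀ x', ∑ a' : (i : Fin N) → Fin (d i), P x' a' = 1) ∧
      NoSignaling P ∧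
      1 < ∑ m, P (x m) (a m) := by
  classical
  have hQform : ∀ v w : ((i : Fin N) → Fin (d i)) → ℂ,
      star v ⬝ᵥ Pr.mulVec w
        = ∑ m, star (star (vtens fun i => B i (x m i) (a m i)) ⬝ᵥ v)
            * (star (vtens fun i => B i (x m i) (a m i)) ⬝ᵥ w) := by
    intro v w
    rw [hPr, UPBaux.sum_mulVec, UPBaux.dot_sum]
    exact Finset.sum_congr rfl fun m _ => dot_outer_mulVec _ v w
  have hQ : ∀ v : ((i : Fin N) → Fin (d i)) → ℂ,
      star v ⬝ᵥ Pr.mulVec v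
        = ((∑ m, Complex.normSq (star (vtens fun i => B i (x m i) (a m i)) ⬝ᵥ v) : ℝ) : ℂ) := by
    intro v
    rw [hQform, Complex.ofReal_sum]
    exact Finset.sum_congr rfl fun m _ => by
      simp only [Complex.star_def, Complex.normSq_eq_conj_mul_self]
  have hBunit : ∀ i t b, star (B i t b) ⬝ᵥ B i t b = 1 := by
    intro i t b; rw [hON i t b b, if_pos rfl]
  have hipΨ : ∀ n m : Fin s,
      star (vtens fun i => B i (x n i) (a n i)) ⬝ᵥ (vtens fun i => B i (x m i) (a m i))
        = if n = m then 1 else 0 := by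
    intro n m
    by_cases h : n = m
    · subst h; rw [if_pos rfl, vtens_dot]
      rw [Finset.prod_congr rfl (fun i _ => hBunit i (x n i) (a n i))]
      simp
    · rw [if_neg h]; exact horth n m h
  have hlb : ∀ φ : (i : Fin N) → Fin (d i) → ℂ, (∀ i, star (φ i) ⬝ᵥ φ i = 1) →
      ε ≤ ∑ m, Complex.normSq (star (vtens fun i => B i (x m i) (a m i)) ⬝ᵥ vtens φ) := by
    intro φ hφ
    exact hε.2 ⟨φ, hφ, by rw [hQ]⟩
  have hεpos : 0 < ε := by
    obtain ⟨φ₀, hφ₀u, hφ₀e⟩ := hε.1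
    rw [hQ] at hφ₀e
    have he : ε = ∑ m, Complex.normSq (star (vtens fun i => B i (x m i) (a m i)) ⬝ᵥ vtens φ₀) :=
      Complex.ofReal_injective hφ₀e
    obtain ⟨m, hm⟩ := hupb φ₀ hφ₀u
    have h1 : 0 < Complex.normSq (star (vtens fun i => B i (x m i) (a m i)) ⬝ᵥ vtens φ₀) :=
      Complex.normSq_pos.mpr hm
    have h2 := Finset.single_le_sum
      (f := fun m => Complex.normSq (star (vtens fun i => B i (x m i) (a m i)) ⬝ᵥ vtens φ₀))
      (fun m _ => Complex.normSq_nonneg _) (Finset.mem_univ m)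
    rw [he]; linarith
  have htrPr : Pr.trace = (s : ℂ) := by
    rw [hPr, Matrix.trace_sum]
    have h1 : ∀ m ∈ (Finset.univ : Finset (Fin s)),
        (outer (vtens fun i => B i (x m i) (a m i))).trace = 1 := by
      intro m _
      rw [trace_outer]
      have := hipΨ m m
      rwa [if_pos rfl] at this
    rw [Finset.sum_congr rfl h1]
    simp
  have hcard : (Fintype.card ((i : Fin N) → Fin (d i)) : ℝ) = ∏ i, (d i : ℝ) := by
    rw [Fintype.card_pi]
    push_cast
    simp
  have hDpos' : (0:ℝ) ≤ (s:ℝ) := Nat.cast_nonneg s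
  have hDgt : (s : ℝ) < ∏ i, (d i : ℝ) := by
    have h1 : (s:ℝ) < ((∏ i, d i : ℕ) : ℝ) := by exact_mod_cast hproper
    rwa [Nat.cast_prod] at h1
  have hDpos : (0:ℝ) < ∏ i, (d i : ℝ) := lt_of_le_of_lt hDpos' hDgt
  have hkey : ε * ∏ i, (d i : ℝ) < (s : ℝ) := by
    by_contra hcon
    push_neg at hcon
    have hdiagC : ∀ u : (i : Fin N) → Fin (d i),
        star (vtens fun i => dvec (u i)) ⬝ᵥ Pr.mulVec (vtens fun i => dvec (u i)) = Pr u u := by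
      intro u
      rw [vtens_delta]
      simp only [dotProduct, mulVec, Pi.star_apply, apply_ite (star : ℂ → ℂ), star_one,
        star_zero, ite_mul, one_mul, zero_mul, mul_ite, mul_one, mul_zero]
      simp [Finset.sum_ite_eq']
    have hsum_diag : ∑ u : (i : Fin N) → Fin (d i),
        (∑ m, Complex.normSq (star (vtens fun i => B i (x m i) (a m i)) ⬝ᵥ
          vtens fun i => dvec (u i))) = (s:ℝ) := by
      apply Complex.ofReal_injective
      rw [Complex.ofReal_sum]
      rw [Finset.sum_congr rfl (fun u (_ : u ∈ Finset.univ) => (hQ _).symm)]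
      rw [Finset.sum_congr rfl (fun u (_ : u ∈ Finset.univ) => hdiagC u)]
      rw [show (∑ u, Pr u u) = Pr.trace from rfl, htrPr]
      simp
    have hge : ∀ u : (i : Fin N) → Fin (d i),
        ε ≤ ∑ m, Complex.normSq (star (vtens fun i => B i (x m i) (a m i)) ⬝ᵥ
          vtens fun i => dvec (u i)) :=
      fun u => hlb (fun i => dvec (u i)) (fun i => dvec_unit _)
    have hεD : ε * ∏ i, (d i:ℝ) ≤ (s:ℝ) := by
      rw [← hsum_diag]
      calc ε * ∏ i, (d i:ℝ) = ∑ _u : (i : Fin N) → Fin (d i), ε := by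
            rw [Finset.sum_const, nsmul_eq_mul, Finset.card_univ, hcard]; ring
        _ ≤ _ := Finset.sum_le_sum fun u _ => hge u
    have heqεD : ε * ∏ i, (d i:ℝ) = (s:ℝ) := le_antisymm hεD hcon
    have heq : ∀ u : (i : Fin N) → Fin (d i),
        (∑ m, Complex.normSq (star (vtens fun i => B i (x m i) (a m i)) ⬝ᵥ
          vtens fun i => dvec (u i))) = ε := by
      have h0 : ∑ u : (i : Fin N) → Fin (d i),
          ((∑ m, Complex.normSq (star (vtens fun i => B i (x m i) (a m i)) ⬝ᵥ
            vtens fun i => dvec (u i))) - ε) = 0 := by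
        rw [Finset.sum_sub_distrib, hsum_diag, Finset.sum_const, nsmul_eq_mul,
          Finset.card_univ, hcard]
        linarith
      intro u
      have := (Finset.sum_eq_zero_iff_of_nonneg
        (fun u (_ : u ∈ Finset.univ) => sub_nonneg.mpr (hge u))).mp h0 u (Finset.mem_univ u)
      linarith [this]
    have hind : ∀ T : Finset (Fin N), ∀ φ : (i : Fin N) → Fin (d i) → ℂ,
        (∀ i, star (φ i) ⬝ᵥ φ i = 1) → (∀ i ∉ T, ∃ b, φ i = dvec b) →
        (∑ m, Complex.normSq (star (vtens fun i => B i (x m i) (a m i)) ⬝ᵥ vtens φ)) = ε := by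
      intro T
      induction T using Finset.induction_on with
      | empty =>
        intro φ hunit hdel
        choose bb hbb using fun i => hdel i (Finset.notMem_empty i)
        rw [show φ = fun i => dvec (bb i) from funext hbb]
        exact heq bb
      | @insert j T hjT IH =>
        intro φ hunit hdel
        set γ : Fin s → Fin (d j) → ℂ :=
          fun m b => star (vtens fun i => B i (x m i) (a m i)) ⬝ᵥ
            vtens (Function.update φ j (dvec b)) with hγ
        have hdec : ∀ (c : Fin (d j) → ℂ) m,
            star (vtens fun i => B i (x m i) (a m i)) ⬝ᵥ vtens (Function.update φ j c)
              = ∑ b, c b * γ m b := by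
          intro c m
          rw [vtens_update_decomp φ j c, dot_sum]
          exact Finset.sum_congr rfl fun b _ => by
            rw [dotProduct_smul, smul_eq_mul, hγ]
        have hb' : ∀ c : Fin (d j) → ℂ, star c ⬝ᵥ c = 1 →
            ε ≤ ∑ m, Complex.normSq (∑ b, c b * γ m b) := by
          intro c hcunit
          have hupd_unit : ∀ i, star ((Function.update φ j c) i) ⬝ᵥ (Function.update φ j c) i = 1 := by
            intro i
            by_cases h : i = j
            · subst h; rw [Function.update_self]; exact hcunit
            · rw [Function.update_of_ne h]; exact hunit i
          have h1 := hlb (Function.update φ j c) hupd_unit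
          calc ε ≤ _ := h1
            _ = _ := Finset.sum_congr rfl fun m _ => by rw [hdec c m]
        have hdiag' : ∀ b, (∑ m, Complex.normSq (γ m b)) = ε := by
          intro b
          apply IH (Function.update φ j (dvec b))
          · intro i
            by_cases h : i = j
            · subst h; rw [Function.update_self]; exact dvec_unit b
            · rw [Function.update_of_ne h]; exact hunit i
          · intro i hiT
            by_cases h : i = j
            · subst h; exact ⟨b, Function.update_self _ _ _⟩
            · rw [Function.update_of_ne h]
              refine hdel i ?_
              simp [Finset.mem_insert, h, hiT]
        have hres := step_lemma ε γ hb' hdiag' (φ j) (hunit j)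
        calc (∑ m, Complex.normSq (star (vtens fun i => B i (x m i) (a m i)) ⬝ᵥ vtens φ))
            = ∑ m, Complex.normSq (∑ b, φ j b * γ m b) := by
              apply Finset.sum_congr rfl; intro m _
              rw [← hdec (φ j) m, Function.update_eq_self]
          _ = ε := hres
    have hspos : 0 < (s:ℝ) := heqεD ▸ mul_pos hεpos hDpos
    have hsnat : 0 < s := by exact_mod_cast hspos
    set m0 : Fin s := ⟨0, hsnat⟩
    have hfin := hind Finset.univ (fun i => B i (x m0 i) (a m0 i))
      (fun i => hBunit i _ _) (fun i hi => absurd (Finset.mem_univ i) hi)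
    have h1ε : (1:ℝ) ≤ ε := by
      rw [← hfin]
      have hterm1 : Complex.normSq (star (vtens fun i => B i (x m0 i) (a m0 i)) ⬝ᵥ
          vtens fun i => B i (x m0 i) (a m0 i)) = 1 := by
        have := hipΨ m0 m0
        rw [if_pos rfl] at this
        rw [this]
        simp
      calc (1:ℝ) = _ := hterm1.symm
        _ ≤ _ := Finset.single_le_sum
          (f := fun m => Complex.normSq (star (vtens fun i => B i (x m i) (a m i)) ⬝ᵥ
            vtens fun i => B i (x m0 i) (a m0 i)))
          (fun m _ => Complex.normSq_nonneg _) (Finset.mem_univ m0)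
    have hmul : ε * ∏ i, (d i:ℝ) < 1 * ∏ i, (d i:ℝ) := by
      rw [one_mul, heqεD]; exact hDgt
    have hlt1 : ε < 1 := lt_of_mul_lt_mul_right hmul hDpos.le
    linarith
  have hδpos : 0 < (s:ℝ) - ε * ∏ i, (d i : ℝ) := sub_pos.mpr hkey
  have hδne : ((((s:ℝ) - ε * ∏ i, (d i : ℝ)) : ℝ) : ℂ) ≠ 0 :=
    Complex.ofReal_ne_zero.mpr hδpos.ne'
  have hcastcard : ((Fintype.card ((i : Fin N) → Fin (d i)) : ℂ)) = (((∏ i, (d i:ℝ)) : ℝ) : ℂ) := by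
    rw [← hcard]
    norm_cast
  have htrW : W.trace = 1 := by
    rw [hW, Matrix.trace_smul, Matrix.trace_sub, htrPr, Matrix.trace_smul, Matrix.trace_one,
      smul_eq_mul, hcastcard, Complex.real_smul]
    rw [show ((s:ℂ) - ((ε:ℝ):ℂ) * (((∏ i, (d i:ℝ)) : ℝ) : ℂ))
        = ((((s:ℝ) - ε * ∏ i, (d i : ℝ)) : ℝ) : ℂ) from by push_cast; ring]
    rw [inv_mul_cancel₀ hδne]
  have hWform : ∀ v : ((i : Fin N) → Fin (d i)) → ℂ,
      star v ⬝ᵥ W.mulVec v = ((((s:ℝ) - ε * ∏ i, (d i : ℝ)) : ℝ) : ℂ)⁻¹ *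
        (star v ⬝ᵥ Pr.mulVec v - ((ε:ℝ):ℂ) * (star v ⬝ᵥ v)) := by
    intro v
    rw [hW, Matrix.smul_mulVec, Matrix.sub_mulVec, Matrix.smul_mulVec,
      Matrix.one_mulVec, dotProduct_smul, smul_eq_mul]
    congr 1
    rw [dotProduct_sub]
    congr 1
    rw [dotProduct_smul, Complex.real_smul]
  have hpos : ∀ φ : (i : Fin N) → Fin (d i) → ℂ, (∀ i, star (φ i) ⬝ᵥ φ i = 1) →
      0 ≤ (star (vtens φ) ⬝ᵥ W.mulVec (vtens φ)).re := by
    intro φ hφ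
    rw [hWform, hQ]
    have hvv : star (vtens φ) ⬝ᵥ vtens φ = 1 := by
      rw [vtens_dot, Finset.prod_congr rfl (fun i _ => hφ i)]
      simp
    rw [hvv, mul_one]
    rw [show ((((s:ℝ) - ε * ∏ i, (d i : ℝ)) : ℝ) : ℂ)⁻¹ *
        (((((∑ m, Complex.normSq (star (vtens fun i => B i (x m i) (a m i)) ⬝ᵥ vtens φ)) : ℝ)) : ℂ)
          - ((ε:ℝ):ℂ))
        = ((((((s:ℝ) - ε * ∏ i, (d i : ℝ)))⁻¹ *
            ((∑ m, Complex.normSq (star (vtens fun i => B i (x m i) (a m i)) ⬝ᵥ vtens φ)) - ε) : ℝ)) : ℂ)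
        from by push_cast; ring]
    rw [Complex.ofReal_re]
    exact mul_nonneg (inv_nonneg.mpr hδpos.le) (sub_nonneg.mpr (hlb φ hφ))
  have hterm : ∀ m : Fin s,
      ((W * tensProd fun i => proj (B i (x m i) (a m i))).trace).re
        = ((s:ℝ) - ε * ∏ i, (d i : ℝ))⁻¹ * (1 - ε) := by
    intro m
    rw [tensProd_proj_eq_outer, trace_mul_outer, hWform]
    have h2 : star (vtens fun i => B i (x m i) (a m i)) ⬝ᵥ (vtens fun i => B i (x m i) (a m i)) = 1 := by
      have := hipΨ m m
      rwa [if_pos rfl] at this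
    have h1 : star (vtens fun i => B i (x m i) (a m i)) ⬝ᵥ
        Pr.mulVec (vtens fun i => B i (x m i) (a m i)) = 1 := by
      rw [hQform]
      rw [Finset.sum_congr rfl (fun n (_ : n ∈ Finset.univ) => by rw [hipΨ n m])]
      simp [apply_ite (star : ℂ → ℂ), Finset.sum_ite_eq']
    rw [h1, h2, mul_one]
    rw [show ((((s:ℝ) - ε * ∏ i, (d i : ℝ)) : ℝ) : ℂ)⁻¹ * (1 - ((ε:ℝ):ℂ))
        = (((((s:ℝ) - ε * ∏ i, (d i : ℝ))⁻¹ * (1 - ε)) : ℝ) : ℂ) from by push_cast; ring]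
    exact Complex.ofReal_re _
  have hBellSum : ∑ m, ((W * tensProd fun i => proj (B i (x m i) (a m i))).trace).re
      = (s:ℝ) * (1 - ε) / ((s:ℝ) - ε * ∏ i, (d i : ℝ)) := by
    rw [Finset.sum_congr rfl (fun m (_ : m ∈ Finset.univ) => hterm m), Finset.sum_const,
      Finset.card_univ, Fintype.card_fin, nsmul_eq_mul, div_eq_mul_inv]
    ring
  have hgt : 1 < (s:ℝ) * (1 - ε) / ((s:ℝ) - ε * ∏ i, (d i : ℝ)) := by
    rw [lt_div_iff₀ hδpos, one_mul]
    have h1 : ε * (s:ℝ) < ε * ∏ i, (d i : ℝ) := mul_lt_mul_of_pos_left hDgt hεpos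
    nlinarith
  refine ⟨hεpos, htrW, hpos, hBellSum, hgt, ?_⟩
  refine ⟨fun x' a' => (star (vtens fun i => B i (x' i) (a' i)) ⬝ᵥ
      W.mulVec (vtens fun i => B i (x' i) (a' i))).re,
    fun x' a' => hpos _ (fun i => hBunit i _ _), ?_, ?_, ?_⟩
  · intro x'
    have h1 : ∀ a' ∈ (Finset.univ : Finset ((i : Fin N) → Fin (d i))),
        (star (vtens fun i => B i (x' i) (a' i)) ⬝ᵥ
          W.mulVec (vtens fun i => B i (x' i) (a' i))).re
          = ((W * outer (vtens fun i => B i (x' i) (a' i))).trace).re :=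
      fun a' _ => by rw [trace_mul_outer]
    rw [Finset.sum_congr rfl h1, ← Complex.re_sum, ← Matrix.trace_sum, ← Matrix.mul_sum]
    rw [sum_outer_eq_one (fun i => B i (x' i)) (fun i => hON i (x' i)), mul_one, htrW]
    rfl
  · intro j x₁ x₂ hagree a₀
    have key : ∀ x₀ : (i : Fin N) → Fin (K i),
        ∑ b : Fin (d j), (star (vtens fun i => B i (x₀ i) (Function.update a₀ j b i)) ⬝ᵥ
            W.mulVec (vtens fun i => B i (x₀ i) (Function.update a₀ j b i))).re
          = ((W * tensProd (fun i => if i = j then (1 : Matrix (Fin (d i)) (Fin (d i)) ℂ)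
              else proj (B i (x₀ i) (a₀ i)))).trace).re := by
      intro x₀
      have h1 : ∀ b ∈ (Finset.univ : Finset (Fin (d j))),
          (star (vtens fun i => B i (x₀ i) (Function.update a₀ j b i)) ⬝ᵥ
            W.mulVec (vtens fun i => B i (x₀ i) (Function.update a₀ j b i))).re
            = ((W * outer (vtens fun i => B i (x₀ i) (Function.update a₀ j b i))).trace).re :=
        fun b _ => by rw [trace_mul_outer]
      rw [Finset.sum_congr rfl h1, ← Complex.re_sum, ← Matrix.trace_sum, ← Matrix.mul_sum]
      rw [sum_outer_update (fun i => B i (x₀ i)) (fun i => hON i (x₀ i)) j a₀]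
    have h2 := key x₁
    have h3 := key x₂
    have h4 : (fun i => if i = j then (1 : Matrix (Fin (d i)) (Fin (d i)) ℂ)
          else proj (B i (x₁ i) (a₀ i)))
        = (fun i => if i = j then (1 : Matrix (Fin (d i)) (Fin (d i)) ℂ)
          else proj (B i (x₂ i) (a₀ i))) := by
      funext i
      by_cases h : i = j
      · simp [h]
      · simp only [if_neg h, hagree i h]
    rw [h2, h3, h4]
  · have h3 : ∀ m ∈ (Finset.univ : Finset (Fin s)),
        (star (vtens fun i => B i (x m i) (a m i)) ⬝ᵥ
          W.mulVec (vtens fun i => B i (x m i) (a m i))).re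
          = ((s:ℝ) - ε * ∏ i, (d i : ℝ))⁻¹ * (1 - ε) := by
      intro m _
      have h5 := hterm m
      rwa [tensProd_proj_eq_outer, trace_mul_outer] at h5
    rw [Finset.sum_congr rfl h3, Finset.sum_const, Finset.card_univ, Fintype.card_fin,
      nsmul_eq_mul]
    calc (1:ℝ) < (s:ℝ) * (1 - ε) / ((s:ℝ) - ε * ∏ i, (d i : ℝ)) := hgt
      _ = (s:ℝ) * (((s:ℝ) - ε * ∏ i, (d i : ℝ))⁻¹ * (1 - ε)) := by
        rw [div_eq_mul_inv]; ring
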